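/- Let positive semidefinite random matrix W (i.e., a random matrix that is positive semidefinite almost surely) and a fixed positive definite matrix M be given. Then the probability that W is not ≼ M (i.e., the complement of the event {M - W positive semidefinite}) is at most trace(E[W] · M⁻¹). -/

import Mathlib

open Matrix MeasureTheory
open scoped MatrixOrder

lemma psd_transpose_eq {k : ℕ} {R : Matrix (Fin k) (Fin k) ℝ} (hR : R.PosSemidef) : Rᵀ = R := by
  have := hR.isHermitian
  rwa [IsHermitian, conjTranspose_eq_transpose_of_trivial] at this

lemma quadform_le_trace {k : ℕ} {B : Matrix (Fin k) (Fin k) ℝ} (hB : B.PosSemidef)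
    (y : Fin k → ℝ) : y ⬝ᵥ (B *ᵥ y) ≤ (y ⬝ᵥ y) * B.trace := by
  set C := CFC.sqrt B with hCdef
  have hCs : Cᵀ = C := psd_transpose_eq (CFC.sqrt_nonneg B).posSemidef
  have hCC : C * C = B := CFC.sqrt_mul_sqrt_self B hB.nonneg
  have h1 : y ⬝ᵥ (B *ᵥ y) = (C *ᵥ y) ⬝ᵥ (C *ᵥ y) := by
    rw [← hCC, ← mulVec_mulVec, dotProduct_mulVec y C, ← mulVec_transpose, hCs]
  have h2 : (C *ᵥ y) ⬝ᵥ (C *ᵥ y) ≤ ∑ i, (∑ j, C i j ^ 2) * (y ⬝ᵥ y) := by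
    simp only [dotProduct, mulVec]
    refine Finset.sum_le_sum fun i _ => ?_
    calc (∑ j, C i j * y j) * ∑ j, C i j * y j
        = (∑ j, C i j * y j) ^ 2 := by ring
      _ ≤ (∑ j, C i j ^ 2) * ∑ j, y j ^ 2 :=
          Finset.sum_mul_sq_le_sq_mul_sq _ _ _
      _ = (∑ j, C i j ^ 2) * ∑ j, y j * y j := by simp [sq]
  have h3 : B.trace = ∑ i, ∑ j, C i j ^ 2 := by
    rw [← hCC]
    simp only [Matrix.trace, Matrix.diag, Matrix.mul_apply, sq]
    refine Finset.sum_congr rfl fun i _ => Finset.sum_congr rfl fun j _ => ?_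
    rw [show C j i = Cᵀ i j from rfl, hCs]
  rw [h1, h3, mul_comm]
  rw [Finset.sum_mul]
  exact h2

lemma dot_sym {k : ℕ} {S : Matrix (Fin k) (Fin k) ℝ} (hS : Sᵀ = S) (y v : Fin k → ℝ) :
    y ⬝ᵥ (S *ᵥ v) = (S *ᵥ y) ⬝ᵥ v := by
  rw [dotProduct_mulVec, ← mulVec_transpose, hS]

lemma one_le_trace_aux {k : ℕ} {Wm M : Matrix (Fin k) (Fin k) ℝ}
    (hW : Wm.PosSemidef) (hM : M.PosDef) (hns : ¬ (M - Wm).PosSemidef) :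
    1 ≤ (Wm * M⁻¹).trace := by
  have hMinv : M⁻¹.PosDef := hM.inv
  set R := CFC.sqrt M⁻¹ with hRdef
  have hRpsd : R.PosSemidef := (CFC.sqrt_nonneg M⁻¹).posSemidef
  have hRs : Rᵀ = R := psd_transpose_eq hRpsd
  have hRH : Rᴴ = R := hRpsd.isHermitian
  have hRR : R * R = M⁻¹ := CFC.sqrt_mul_sqrt_self M⁻¹ hMinv.posSemidef.nonneg
  have hdetM : IsUnit M.det := hM.det_pos.ne'.isUnit
  have hdetR : IsUnit R.det := by
    have h : R.det * R.det = M⁻¹.det := by rw [← det_mul, hRR]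
    have hMi : IsUnit M⁻¹.det := hM.inv.det_pos.ne'.isUnit
    rcases eq_or_ne R.det 0 with h0 | h0
    · rw [h0, mul_zero] at h
      exact absurd h.symm hMi.ne_zero
    · exact h0.isUnit
  -- get a violating vector
  have hherm : (M - Wm).IsHermitian := hM.isHermitian.sub hW.isHermitian
  obtain ⟨x, hx⟩ := not_forall.mp fun h => hns (posSemidef_iff_dotProduct_mulVec.mpr ⟨hherm, h⟩)
  have hlt : x ⬝ᵥ (M *ᵥ x) < x ⬝ᵥ (Wm *ᵥ x) := by
    rw [not_le] at hx
    have : x ⬝ᵥ ((M - Wm) *ᵥ x) < 0 := by simpa using hx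
    rw [sub_mulVec, dotProduct_sub] at this
    linarith
  have hxne : x ≠ 0 := by
    rintro rfl
    simp at hlt
  have hMx : 0 < x ⬝ᵥ (M *ᵥ x) := by simpa using hM.dotProduct_mulVec_pos hxne
  obtain ⟨y, hRy⟩ : ∃ y, R *ᵥ y = x :=
    ⟨R⁻¹ *ᵥ x, by rw [mulVec_mulVec, mul_nonsing_inv _ hdetR, one_mulVec]⟩
  have hRMR : R * M * R = 1 := by
    have hMeq : M = R⁻¹ * R⁻¹ := by
      rw [← Matrix.mul_inv_rev, hRR, nonsing_inv_nonsing_inv _ hdetM]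
    rw [hMeq, show R * (R⁻¹ * R⁻¹) * R = (R * R⁻¹) * (R⁻¹ * R) by
      simp only [mul_assoc], mul_nonsing_inv _ hdetR, nonsing_inv_mul _ hdetR, one_mul]
  set B := R * Wm * R with hBdef
  have hB : B.PosSemidef := by
    have := hW.mul_mul_conjTranspose_same R
    rwa [hRH] at this
  have hyy : y ⬝ᵥ y = x ⬝ᵥ (M *ᵥ x) := by
    calc y ⬝ᵥ y = y ⬝ᵥ ((R * M * R) *ᵥ y) := by rw [hRMR, one_mulVec]
      _ = y ⬝ᵥ (R *ᵥ ((M * R) *ᵥ y)) := by rw [mulVec_mulVec, ← mul_assoc]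
      _ = (R *ᵥ y) ⬝ᵥ ((M * R) *ᵥ y) := dot_sym hRs _ _
      _ = x ⬝ᵥ (M *ᵥ x) := by rw [← mulVec_mulVec, hRy]
  have hq : x ⬝ᵥ (Wm *ᵥ x) = y ⬝ᵥ (B *ᵥ y) := by
    calc x ⬝ᵥ (Wm *ᵥ x)
        = (R *ᵥ y) ⬝ᵥ ((Wm * R) *ᵥ y) := by rw [← hRy, mulVec_mulVec]
      _ = y ⬝ᵥ (R *ᵥ ((Wm * R) *ᵥ y)) := (dot_sym hRs _ _).symm
      _ = y ⬝ᵥ (B *ᵥ y) := by rw [mulVec_mulVec, ← mul_assoc, hBdef]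
  have htr : B.trace = (Wm * M⁻¹).trace := by
    rw [hBdef, trace_mul_cycle, hRR, trace_mul_comm]
  have hkey := quadform_le_trace hB y
  rw [← hq, hyy, htr] at hkey
  nlinarith [hkey, hlt, hMx]

lemma psd_diag_nonneg {k : ℕ} {B : Matrix (Fin k) (Fin k) ℝ} (hB : B.PosSemidef)
    (i : Fin k) : 0 ≤ B i i := by
  have := hB.dotProduct_mulVec_nonneg (Pi.single i 1)
  simpa [dotProduct, mulVec, Pi.single_apply, Finset.sum_ite_eq] using this

lemma trace_mul_inv_nonneg {k : ℕ} {Wm M : Matrix (Fin k) (Fin k) ℝ}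
    (hW : Wm.PosSemidef) (hM : M.PosDef) : 0 ≤ (Wm * M⁻¹).trace := by
  have hMinv : M⁻¹.PosDef := hM.inv
  set R := CFC.sqrt M⁻¹ with hRdef
  have hRpsd : R.PosSemidef := (CFC.sqrt_nonneg M⁻¹).posSemidef
  have hRH : Rᴴ = R := hRpsd.isHermitian
  have hRR : R * R = M⁻¹ := CFC.sqrt_mul_sqrt_self M⁻¹ hMinv.posSemidef.nonneg
  have hB : (R * Wm * R).PosSemidef := by
    have := hW.mul_mul_conjTranspose_same R
    rwa [hRH] at this
  have htr : (R * Wm * R).trace = (Wm * M⁻¹).trace := by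
    rw [trace_mul_cycle, hRR, trace_mul_comm]
  rw [← htr]
  exact Finset.sum_nonneg fun i _ => psd_diag_nonneg hB i

theorem matrix_markov_inequality {k : ℕ} {Ω : Type*} [MeasurableSpace Ω]
    (μ : Measure Ω) [IsProbabilityMeasure μ]
    (W : Ω → Matrix (Fin k) (Fin k) ℝ)
    (hpsd : ∀ᵐ ω ∂μ, (W ω).PosSemidef)
    (hint : ∀ i j, Integrable (fun ω => W ω i j) μ)
    (M : Matrix (Fin k) (Fin k) ℝ) (hM : M.PosDef) :
    (μ {ω | ¬ (M - W ω).PosSemidef}).toReal ≤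
      Matrix.trace ((Matrix.of fun i j => ∫ ω, W ω i j ∂μ) * M⁻¹) := by
  set f : Ω → ℝ := fun ω => ∑ i, ∑ j, W ω i j * M⁻¹ j i with hfdef
  have hftr : ∀ ω, f ω = (W ω * M⁻¹).trace := fun ω => by
    simp [hfdef, Matrix.trace, Matrix.diag, Matrix.mul_apply]
  have hInt : Integrable f μ :=
    integrable_finset_sum _ fun i _ => integrable_finset_sum _ fun j _ =>
      (hint i j).mul_const _
  have h0 : 0 ≤ᵐ[μ] f := hpsd.mono fun ω hp => by
    rw [Pi.zero_apply, hftr ω]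
    exact trace_mul_inv_nonneg hp hM
  have hmar := mul_meas_ge_le_integral_of_nonneg h0 hInt 1
  rw [one_mul] at hmar
  have hsub : μ {ω | ¬ (M - W ω).PosSemidef} ≤ μ {ω | 1 ≤ f ω} :=
    measure_mono_ae (hpsd.mono fun ω hp hmem => by
      show 1 ≤ f ω
      rw [hftr ω]
      exact one_le_trace_aux hp hM hmem)
  have hInt2 : ∀ i ∈ Finset.univ, Integrable (fun ω => ∑ j, W ω i j * M⁻¹ j i) μ :=
    fun i _ => integrable_finset_sum _ fun j _ => (hint i j).mul_const _
  have hintegral : ∫ ω, f ω ∂μ =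
      Matrix.trace ((Matrix.of fun i j => ∫ ω, W ω i j ∂μ) * M⁻¹) := by
    rw [hfdef]
    rw [integral_finset_sum _ hInt2]
    simp only [Matrix.trace, Matrix.diag, Matrix.mul_apply, Matrix.of_apply]
    refine Finset.sum_congr rfl fun i _ => ?_
    rw [integral_finset_sum _ fun j _ => (hint i j).mul_const _]
    exact Finset.sum_congr rfl fun j _ => integral_mul_const _ _
  calc (μ {ω | ¬ (M - W ω).PosSemidef}).toReal
      ≤ (μ {ω | 1 ≤ f ω}).toReal := ENNReal.toReal_mono (measure_ne_top μ _) hsub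
    _ ≤ ∫ ω, f ω ∂μ := hmar
    _ = _ := hintegral
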